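/- Let k ≥ 3 be an integer and let (n_1, …, n_k) be positive integers with n_1 ≥ n_2 ≥ … ≥ n_k, and set p = n_1 + … + n_k. If n_1 ≤ p/2, then 4 − 2(p − n_1) + Σ_{i=1}^{k} n_i(p − n_i) ≥ p²/2; equivalently, 2(4 − 2(p − n_1) + Σ_{i=1}^{k} n_i(p − n_i)) ≥ p². -/
import Mathlib

set_option maxHeartbeats 1000000


/-- arithmetic step in Theorem 23: Let `k ≥ 3` and `(n 0, …, n (k-1))` be
positive integers with `n 0 ≥ … ≥ n (k-1)` and `p = ∑ n i`. If `n 0 ≤ p/2` (equivalently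
`2 * n 0 ≤ p`), then `4 − 2(p − n 0) + Σᵢ n i (p − n i) ≥ p²/2`; equivalently,
`2(4 − 2(p − n 0) + Σᵢ n i (p − n i)) ≥ p²`. -/
theorem kpartite_edge_bound_ge_quarter_square
    (k : ℕ) (hk : 3 ≤ k) (n : Fin k → ℕ) (hpos : ∀ i, 0 < n i) (hmono : Antitone n)
    (hn1 : 2 * n ⟨0, by omega⟩ ≤ ∑ i, n i) :
    (∑ i, (n i : ℤ)) ^ 2 ≤
      2 * (4 - 2 * ((∑ i, (n i : ℤ)) - (n ⟨0, by omega⟩ : ℤ)) +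
        ∑ i, (n i : ℤ) * ((∑ j, (n j : ℤ)) - (n i : ℤ))) := by
  set i0 : Fin k := ⟨0, by omega⟩ with hi0
  set i1 : Fin k := ⟨1, by omega⟩ with hi1
  set i2 : Fin k := ⟨2, by omega⟩ with hi2
  set s : Finset (Fin k) := (Finset.univ.erase i0).erase i1 with hs
  have hi1s : i1 ∈ Finset.univ.erase i0 :=
    Finset.mem_erase.2 ⟨by simp [hi0, hi1, Fin.ext_iff], Finset.mem_univ _⟩
  have hi2s : i2 ∈ s :=
    Finset.mem_erase.2 ⟨by simp [hi1, hi2, Fin.ext_iff],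
      Finset.mem_erase.2 ⟨by simp [hi0, hi2, Fin.ext_iff], Finset.mem_univ _⟩⟩
  have hsplit : ∀ f : Fin k → ℤ, ∑ i, f i = f i0 + f i1 + ∑ i ∈ s, f i := by
    intro f
    rw [← Finset.add_sum_erase _ f (Finset.mem_univ i0),
        ← Finset.add_sum_erase _ f hi1s, ← hs, add_assoc]
  have hp : (∑ i, (n i : ℤ)) = (n i0 : ℤ) + (n i1 : ℤ) + ∑ i ∈ s, (n i : ℤ) :=
    hsplit (fun i => (n i : ℤ))
  have hsq : (∑ i, (n i : ℤ)^2)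
      = (n i0 : ℤ)^2 + (n i1 : ℤ)^2 + ∑ i ∈ s, (n i : ℤ)^2 :=
    hsplit (fun i => (n i : ℤ)^2)
  have hsum : ∑ i, (n i : ℤ) * ((∑ j, (n j : ℤ)) - (n i : ℤ))
      = (∑ i, (n i : ℤ)) * (∑ i, (n i : ℤ)) - ∑ i, (n i : ℤ)^2 := by
    rw [Finset.sum_congr rfl (fun i _ => by ring :
        ∀ i ∈ Finset.univ, (n i : ℤ) * ((∑ j, (n j : ℤ)) - (n i : ℤ))
          = (n i : ℤ) * (∑ j, (n j : ℤ)) - (n i : ℤ)^2),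
      Finset.sum_sub_distrib, ← Finset.sum_mul]
  have hb1 : (1:ℤ) ≤ (n i1 : ℤ) := by exact_mod_cast hpos i1
  have hab : (n i1 : ℤ) ≤ (n i0 : ℤ) := by
    have h01 : i0 ≤ i1 := by simp [hi0, hi1, Fin.le_def]
    exact_mod_cast hmono h01
  have hc1 : (1:ℤ) ≤ ∑ i ∈ s, (n i : ℤ) := by
    have h2 : (n i2 : ℤ) ≤ ∑ i ∈ s, (n i : ℤ) :=
      Finset.single_le_sum (f := fun i => (n i : ℤ)) (fun i _ => by positivity) hi2s
    have h3 : (1:ℤ) ≤ (n i2 : ℤ) := by exact_mod_cast hpos i2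
    linarith
  have hac : (n i0 : ℤ) ≤ (n i1 : ℤ) + ∑ i ∈ s, (n i : ℤ) := by
    have h5 : ((2 * n i0 : ℕ) : ℤ) ≤ ((∑ i, n i : ℕ) : ℤ) := by exact_mod_cast hn1
    push_cast at h5
    rw [hp] at h5
    linarith
  have hs2 : ∑ i ∈ s, (n i : ℤ)^2
      ≤ ((n i1 : ℤ) + 1) * (∑ i ∈ s, (n i : ℤ)) - (n i1 : ℤ) := by
    have hstep : ∑ i ∈ s, (n i : ℤ)^2
        ≤ ∑ i ∈ s, (((n i1 : ℤ) + 1) * (n i : ℤ) - (n i1 : ℤ)) := by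
      apply Finset.sum_le_sum
      intro i hi
      have h6 := Finset.mem_erase.1 hi
      have hib : (n i : ℤ) ≤ (n i1 : ℤ) := by
        have hival : i1 ≤ i := by
          have e1 : i ≠ i1 := h6.1
          have e0 : i ≠ i0 := (Finset.mem_erase.1 h6.2).1
          rw [hi0, Fin.ne_iff_vne] at e0
          rw [hi1, Fin.ne_iff_vne] at e1
          rw [hi1, Fin.le_def]
          simp at e0 e1 ⊢
          omega
        exact_mod_cast hmono hival
      have hi1' : (1:ℤ) ≤ (n i : ℤ) := by exact_mod_cast hpos i
      nlinarith [mul_nonneg (sub_nonneg.2 hi1') (sub_nonneg.2 hib)]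
    have heq : ∑ i ∈ s, (((n i1 : ℤ) + 1) * (n i : ℤ) - (n i1 : ℤ))
        = ((n i1 : ℤ) + 1) * (∑ i ∈ s, (n i : ℤ)) - s.card * (n i1 : ℤ) := by
      rw [Finset.sum_sub_distrib, ← Finset.mul_sum, Finset.sum_const, nsmul_eq_mul]
    rw [heq] at hstep
    have hcard : (1:ℤ) ≤ (s.card : ℤ) := by
      exact_mod_cast Finset.card_pos.2 ⟨i2, hi2s⟩
    nlinarith
  rw [hsum, hp, hsq]
  nlinarith [mul_nonneg (sub_nonneg.2 hab) (sub_nonneg.2 hac),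
    mul_nonneg (sub_nonneg.2 hb1) (sub_nonneg.2 hc1),
    mul_nonneg (sub_nonneg.2 hab) (sub_nonneg.2 hc1),
    mul_nonneg (sub_nonneg.2 hac) (sub_nonneg.2 hc1),
    sq_nonneg ((∑ i ∈ s, (n i : ℤ)) - 2), sq_nonneg ((∑ i ∈ s, (n i : ℤ)) - 3),
    hs2]
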